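/- Let R be a field (e.g. the rationals), and let s(x) = Σ_{n≥0} s_n x^n be a formal power series over R with s_0 = 1, and let t(x) = 1/s(x) = Σ_{n≥0} t_n x^n be its multiplicative inverse. Extend the coefficient sequences by s_n = t_n = 0 for n < 0. Then for every natural number M and every positive integer N, det((s_{i+j-M})_{i,j=0}^{N+M}) = (-1)^{N + binom(M+1,2)} · det((t_{i+j+M+2})_{i,j=0}^{N-1}), where the left-hand matrix has size (N+M+1)×(N+M+1) and the right-hand matrix has size N×N. -/

import Mathlib

open PowerSeries Finset Matrix

section AWaux
variable {R : Type*} [Field R] {s t : PowerSeries R}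

private lemma aw_ht0 (hs0 : coeff 0 s = 1) (hst : s * t = 1) : coeff 0 t = 1 := by
  have h := congrArg (constantCoeff) hst
  simp only [_root_.map_mul, _root_.map_one, ← coeff_zero_eq_constantCoeff] at h
  rw [hs0, one_mul] at h
  exact h

private lemma aw_convST (hst : s * t = 1) (m : ℕ) :
    ∑ a ∈ range (m+1), coeff a s * coeff (m - a) t = if m = 0 then 1 else 0 := by
  have h := congrArg (coeff m) hst
  rw [coeff_mul, Finset.Nat.sum_antidiagonal_eq_sum_range_succ_mk, coeff_one] at h
  exact h

private lemma aw_convTS (hst : s * t = 1) (m : ℕ) :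
    ∑ a ∈ range (m+1), coeff a t * coeff (m - a) s = if m = 0 then 1 else 0 := by
  have h := congrArg (coeff m) (mul_comm s t ▸ hst)
  rw [coeff_mul, Finset.Nat.sum_antidiagonal_eq_sum_range_succ_mk, coeff_one] at h
  exact h

/-- Key double-convolution identity, proved by induction. -/
private lemma aw_PP (hs0 : coeff 0 s = 1) (hst : s * t = 1) :
    ∀ (r k : ℕ), ∑ u ∈ range (r+1), coeff u t *
      (∑ a ∈ range (r - u + 1), coeff a s * coeff ((r - u) + k + 1 - a) t)
      = coeff (r + k + 1) t := by
  have ht0 := aw_ht0 hs0 hst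
  intro r
  induction r with
  | zero =>
    intro k
    simp [hs0, ht0]
  | succ r ih =>
    intro k
    rw [Finset.sum_range_succ]
    have h1 : ∀ u ∈ range (r+1),
        coeff u t * (∑ a ∈ range (r + 1 - u + 1), coeff a s * coeff ((r + 1 - u) + k + 1 - a) t)
        = coeff u t * (∑ a ∈ range (r - u + 1), coeff a s * coeff ((r - u) + (k+1) + 1 - a) t)
          + coeff u t * (coeff (r + 1 - u) s * coeff (k + 1) t) := by
      intro u hu
      rw [mem_range] at hu
      have e1 : r + 1 - u + 1 = (r - u + 1) + 1 := by omega
      rw [e1, Finset.sum_range_succ, mul_add]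
      have hS : ∑ a ∈ range (r - u + 1), coeff a s * coeff ((r + 1 - u) + k + 1 - a) t
          = ∑ a ∈ range (r - u + 1), coeff a s * coeff ((r - u) + (k+1) + 1 - a) t := by
        apply Finset.sum_congr rfl
        intro a ha
        rw [mem_range] at ha
        have : (r + 1 - u) + k + 1 - a = (r - u) + (k+1) + 1 - a := by omega
        rw [this]
      have hL : coeff (r - u + 1) s * coeff ((r + 1 - u) + k + 1 - (r - u + 1)) t
          = coeff (r + 1 - u) s * coeff (k + 1) t := by
        have e2 : (r + 1 - u) + k + 1 - (r - u + 1) = k + 1 := by omega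
        have e3 : r - u + 1 = r + 1 - u := by omega
        rw [e2, e3]
      rw [hS, hL]
    rw [Finset.sum_congr rfl h1, Finset.sum_add_distrib, ih (k+1)]
    have e2 : r + 1 - (r + 1) + 1 = 1 := by omega
    rw [e2]
    simp only [Finset.sum_range_one]
    have e3 : r + 1 - (r+1) + k + 1 - 0 = k + 1 := by omega
    rw [e3, hs0, one_mul]
    have h4 : ∑ u ∈ range (r+1), coeff u t * (coeff (r + 1 - u) s * coeff (k+1) t)
        = (∑ u ∈ range (r+1), coeff u t * coeff (r + 1 - u) s) * coeff (k+1) t := by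
      rw [Finset.sum_mul]
      apply Finset.sum_congr rfl
      intro u hu
      ring
    rw [h4]
    have h5 : ∑ u ∈ range (r+2), coeff u t * coeff (r + 1 - u) s = 0 := by
      rw [aw_convTS hst (r+1)]
      simp
    rw [Finset.sum_range_succ] at h5
    have e6 : r + 1 - (r+1) = 0 := by omega
    rw [e6, hs0, mul_one] at h5
    have h7 : ∑ u ∈ range (r+1), coeff u t * coeff (r + 1 - u) s = - coeff (r+1) t := by
      linear_combination h5
    rw [h7]
    have e8 : r + (k+1) + 1 = r + 1 + k + 1 := by omega
    rw [e8]
    ring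

private lemma aw_PP' (hs0 : coeff 0 s = 1) (hst : s * t = 1) (r k : ℕ) :
    ∑ i ∈ range (r+1), coeff (r - i) t *
      (∑ a ∈ range (i + 1), coeff a s * coeff (i + k + 1 - a) t)
      = coeff (r + k + 1) t := by
  rw [← Finset.sum_range_reflect]
  rw [← aw_PP hs0 hst r k]
  apply Finset.sum_congr rfl
  intro u hu
  rw [mem_range] at hu
  have e1 : r + 1 - 1 - u = r - u := by omega
  have e2 : r - (r - u) = u := by omega
  rw [e1, e2]

/-- entry of A * T -/
private lemma aw_entry1 (hst : s * t = 1) (M n : ℕ) (i k : Fin n) :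
    ∑ j : Fin n,
      (if M ≤ (i:ℕ)+(j:ℕ) then coeff ((i:ℕ)+(j:ℕ)-M) s else 0) *
      (if (j:ℕ) ≤ (k:ℕ) then coeff ((k:ℕ)-(j:ℕ)) t else 0)
    = if (i:ℕ) ≤ M then (if (i:ℕ)+(k:ℕ) = M then 1 else 0)
      else -∑ a ∈ range ((i:ℕ)-M), coeff a s * coeff ((i:ℕ)+(k:ℕ)-M-a) t := by
  have hk : (k:ℕ) < n := k.isLt
  rw [Fin.sum_univ_eq_sum_range (fun j =>
      (if M ≤ (i:ℕ)+j then coeff ((i:ℕ)+j-M) s else 0) *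
      (if j ≤ (k:ℕ) then coeff ((k:ℕ)-j) t else 0)) n]
  have step1 : (∑ j ∈ range n,
      (if M ≤ (i:ℕ)+j then coeff ((i:ℕ)+j-M) s else 0) *
      (if j ≤ (k:ℕ) then coeff ((k:ℕ)-j) t else 0))
      = ∑ j ∈ range ((k:ℕ)+1),
      (if M ≤ (i:ℕ)+j then coeff ((i:ℕ)+j-M) s * coeff ((k:ℕ)-j) t else 0) := by
    rw [← Finset.sum_subset (Finset.range_subset_range.2 hk : range ((k:ℕ)+1) ⊆ range n)
      (fun x _ hnx => by
        rw [mem_range, Nat.lt_succ_iff, not_le] at hnx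
        rw [if_neg (by omega : ¬ x ≤ (k:ℕ)), mul_zero])]
    apply Finset.sum_congr rfl
    intro j hj
    rw [mem_range, Nat.lt_succ_iff] at hj
    rw [if_pos hj, ite_mul, zero_mul]
  rw [step1]
  by_cases h1 : (i:ℕ) + (k:ℕ) < M
  · rw [Finset.sum_eq_zero (fun j hj => by
      rw [mem_range, Nat.lt_succ_iff] at hj
      rw [if_neg (by omega)])]
    rw [if_pos (by omega), if_neg (by omega)]
  · by_cases h2 : (i:ℕ) ≤ M
    · have key : (∑ j ∈ range ((k:ℕ)+1),
          (if M ≤ (i:ℕ)+j then coeff ((i:ℕ)+j-M) s * coeff ((k:ℕ)-j) t else 0))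
          = ∑ a ∈ range ((i:ℕ)+(k:ℕ)-M+1), coeff a s * coeff ((i:ℕ)+(k:ℕ)-M-a) t := by
        rw [Finset.range_eq_Ico,
          ← Finset.sum_Ico_consecutive _ (Nat.zero_le (M-(i:ℕ))) (by omega : M-(i:ℕ) ≤ (k:ℕ)+1)]
        rw [Finset.sum_eq_zero (fun j hj => by
          rw [mem_Ico] at hj
          rw [if_neg (by omega)]), zero_add]
        rw [Finset.sum_Ico_eq_sum_range]
        have e : (k:ℕ)+1-(M-(i:ℕ)) = (i:ℕ)+(k:ℕ)-M+1 := by omega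
        rw [e]
        apply Finset.sum_congr rfl
        intro j hj
        rw [mem_range] at hj
        rw [if_pos (by omega)]
        have e1 : (i:ℕ)+(M-(i:ℕ)+j)-M = j := by omega
        have e2 : (k:ℕ)-(M-(i:ℕ)+j) = (i:ℕ)+(k:ℕ)-M-j := by omega
        rw [e1, e2]
      rw [key, aw_convST hst, if_pos h2]
      split_ifs <;> first | rfl | omega
    · have key : (∑ j ∈ range ((k:ℕ)+1),
          (if M ≤ (i:ℕ)+j then coeff ((i:ℕ)+j-M) s * coeff ((k:ℕ)-j) t else 0))
          = ∑ a ∈ Ico ((i:ℕ)-M) ((i:ℕ)+(k:ℕ)-M+1), coeff a s * coeff ((i:ℕ)+(k:ℕ)-M-a) t := by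
        rw [Finset.sum_Ico_eq_sum_range]
        have e : (i:ℕ)+(k:ℕ)-M+1-((i:ℕ)-M) = (k:ℕ)+1 := by omega
        rw [e]
        apply Finset.sum_congr rfl
        intro j hj
        rw [mem_range, Nat.lt_succ_iff] at hj
        rw [if_pos (by omega)]
        have e1 : (i:ℕ)-M+j = (i:ℕ)+j-M := by omega
        have e2 : (i:ℕ)+(k:ℕ)-M-((i:ℕ)-M+j) = (k:ℕ)-j := by omega
        rw [e2, e1]
      rw [key, if_neg h2]
      have h0 : ∑ a ∈ range ((i:ℕ)+(k:ℕ)-M+1), coeff a s * coeff ((i:ℕ)+(k:ℕ)-M-a) t = 0 := by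
        rw [aw_convST hst, if_neg (by omega)]
      rw [Finset.range_eq_Ico,
        ← Finset.sum_Ico_consecutive _ (Nat.zero_le ((i:ℕ)-M)) (by omega : (i:ℕ)-M ≤ (i:ℕ)+(k:ℕ)-M+1),
        ← Finset.range_eq_Ico] at h0
      linear_combination h0

/-- entry of Tᵗ * (A * T) -/
private lemma aw_entry2 (hs0 : coeff 0 s = 1) (hst : s * t = 1) (M n : ℕ) (l k : Fin n) :
    ∑ i : Fin n,
      (if (i:ℕ) ≤ (l:ℕ) then coeff ((l:ℕ)-(i:ℕ)) t else 0) *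
      (if (i:ℕ) ≤ M then (if (i:ℕ)+(k:ℕ) = M then (1:R) else 0)
       else -∑ a ∈ range ((i:ℕ)-M), coeff a s * coeff ((i:ℕ)+(k:ℕ)-M-a) t)
    = if (l:ℕ) ≤ M ∧ (k:ℕ) ≤ M then
        (if M ≤ (l:ℕ)+(k:ℕ) then coeff ((l:ℕ)+(k:ℕ)-M) t else 0)
      else if M < (l:ℕ) ∧ M < (k:ℕ) then -coeff ((l:ℕ)+(k:ℕ)-M) t else 0 := by
  have hl : (l:ℕ) < n := l.isLt
  rw [Fin.sum_univ_eq_sum_range (fun i =>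
      (if i ≤ (l:ℕ) then coeff ((l:ℕ)-i) t else 0) *
      (if i ≤ M then (if i+(k:ℕ) = M then (1:R) else 0)
       else -∑ a ∈ range (i-M), coeff a s * coeff (i+(k:ℕ)-M-a) t)) n]
  rw [← Finset.sum_subset (Finset.range_subset_range.2 hl : range ((l:ℕ)+1) ⊆ range n)
      (fun x _ hnx => by
        rw [mem_range, Nat.lt_succ_iff, not_le] at hnx
        rw [if_neg (by omega : ¬ x ≤ (l:ℕ)), zero_mul])]
  by_cases hlM : (l:ℕ) ≤ M
  · by_cases hc : (k:ℕ) ≤ M ∧ M - (k:ℕ) ≤ (l:ℕ)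
    · rw [Finset.sum_eq_single_of_mem (M - (k:ℕ)) (by rw [mem_range]; omega)
        (fun x hx hne => by
          rw [mem_range, Nat.lt_succ_iff] at hx
          rw [if_pos (by omega : x ≤ M), if_neg (by omega : ¬ x + (k:ℕ) = M), mul_zero])]
      rw [if_pos (by omega : M - (k:ℕ) ≤ (l:ℕ)), if_pos (by omega : M - (k:ℕ) ≤ M),
        if_pos (by omega : M - (k:ℕ) + (k:ℕ) = M), mul_one]
      rw [if_pos (⟨hlM, hc.1⟩ : (l:ℕ) ≤ M ∧ (k:ℕ) ≤ M), if_pos (by omega : M ≤ (l:ℕ)+(k:ℕ))]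
      have e : (l:ℕ) - (M - (k:ℕ)) = (l:ℕ)+(k:ℕ)-M := by omega
      rw [e]
    · rw [Finset.sum_eq_zero (fun x hx => by
        rw [mem_range, Nat.lt_succ_iff] at hx
        rw [if_pos (by omega : x ≤ M), if_neg (by omega : ¬ x + (k:ℕ) = M), mul_zero])]
      split_ifs <;> first | rfl | omega
  · rw [Finset.range_eq_Ico,
      ← Finset.sum_Ico_consecutive _ (Nat.zero_le (M+1)) (by omega : M+1 ≤ (l:ℕ)+1),
      ← Finset.range_eq_Ico]
    have part1 : ∑ i ∈ range (M+1),
        ((if i ≤ (l:ℕ) then coeff ((l:ℕ)-i) t else 0) *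
         (if i ≤ M then (if i+(k:ℕ) = M then (1:R) else 0)
          else -∑ a ∈ range (i-M), coeff a s * coeff (i+(k:ℕ)-M-a) t))
        = if (k:ℕ) ≤ M then coeff ((l:ℕ)+(k:ℕ)-M) t else 0 := by
      by_cases hk : (k:ℕ) ≤ M
      · rw [Finset.sum_eq_single_of_mem (M - (k:ℕ)) (by rw [mem_range]; omega)
          (fun x hx hne => by
            rw [mem_range, Nat.lt_succ_iff] at hx
            rw [if_pos (by omega : x ≤ M), if_neg (by omega : ¬ x + (k:ℕ) = M), mul_zero])]
        rw [if_pos (by omega : M - (k:ℕ) ≤ (l:ℕ)), if_pos (by omega : M - (k:ℕ) ≤ M),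
          if_pos (by omega : M - (k:ℕ) + (k:ℕ) = M), mul_one, if_pos hk]
        have e : (l:ℕ) - (M - (k:ℕ)) = (l:ℕ)+(k:ℕ)-M := by omega
        rw [e]
      · rw [Finset.sum_eq_zero (fun x hx => by
          rw [mem_range, Nat.lt_succ_iff] at hx
          rw [if_pos (by omega : x ≤ M), if_neg (by omega : ¬ x + (k:ℕ) = M), mul_zero]),
          if_neg hk]
    have part2 : ∑ i ∈ Ico (M+1) ((l:ℕ)+1),
        ((if i ≤ (l:ℕ) then coeff ((l:ℕ)-i) t else 0) *
         (if i ≤ M then (if i+(k:ℕ) = M then (1:R) else 0)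
          else -∑ a ∈ range (i-M), coeff a s * coeff (i+(k:ℕ)-M-a) t))
        = -coeff ((l:ℕ)+(k:ℕ)-M) t := by
      have step : ∀ i ∈ Ico (M+1) ((l:ℕ)+1),
          ((if i ≤ (l:ℕ) then coeff ((l:ℕ)-i) t else 0) *
           (if i ≤ M then (if i+(k:ℕ) = M then (1:R) else 0)
            else -∑ a ∈ range (i-M), coeff a s * coeff (i+(k:ℕ)-M-a) t))
          = -(coeff ((l:ℕ)-i) t * ∑ a ∈ range (i-M), coeff a s * coeff (i+(k:ℕ)-M-a) t) := by
        intro i hi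
        rw [mem_Ico] at hi
        rw [if_pos (by omega : i ≤ (l:ℕ)), if_neg (by omega : ¬ i ≤ M), mul_neg]
      rw [Finset.sum_congr rfl step, Finset.sum_neg_distrib, neg_inj]
      rw [Finset.sum_Ico_eq_sum_range]
      have e : (l:ℕ)+1-(M+1) = ((l:ℕ)-M-1)+1 := by omega
      rw [e]
      have step2 : ∀ j ∈ range (((l:ℕ)-M-1)+1),
          coeff ((l:ℕ)-(M+1+j)) t * ∑ a ∈ range (M+1+j-M), coeff a s * coeff (M+1+j+(k:ℕ)-M-a) t
          = coeff (((l:ℕ)-M-1) - j) t * ∑ a ∈ range (j+1), coeff a s * coeff (j+(k:ℕ)+1-a) t := by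
        intro j hj
        rw [mem_range] at hj
        have e1 : (l:ℕ)-(M+1+j) = ((l:ℕ)-M-1) - j := by omega
        have e2 : M+1+j-M = j+1 := by omega
        have e3 : ∀ a, M+1+j+(k:ℕ)-M-a = j+(k:ℕ)+1-a := by intro a; omega
        simp only [e1, e2, e3]
      rw [Finset.sum_congr rfl step2, aw_PP' hs0 hst]
      have e4 : (l:ℕ)-M-1+(k:ℕ)+1 = (l:ℕ)+(k:ℕ)-M := by omega
      rw [e4]
    rw [part1, part2]
    by_cases hk : (k:ℕ) ≤ M
    · rw [if_pos hk, if_neg (by omega : ¬ ((l:ℕ) ≤ M ∧ (k:ℕ) ≤ M)),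
        if_neg (by omega : ¬ (M < (l:ℕ) ∧ M < (k:ℕ)))]
      ring
    · rw [if_neg hk, if_neg (by omega : ¬ ((l:ℕ) ≤ M ∧ (k:ℕ) ≤ M)),
        if_pos (by omega : M < (l:ℕ) ∧ M < (k:ℕ))]
      ring

private lemma aw_detG (ht0 : coeff 0 t = 1) : ∀ M : ℕ,
    (Matrix.of fun l k : Fin (M+1) =>
      if M ≤ (l:ℕ)+(k:ℕ) then coeff ((l:ℕ)+(k:ℕ)-M) t else 0).det
    = (-1:R)^((M+1).choose 2) := by
  intro M
  induction M with
  | zero => simp [ht0]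
  | succ M ih =>
    rw [Matrix.det_succ_row_zero]
    rw [Finset.sum_eq_single_of_mem (Fin.last (M+1)) (Finset.mem_univ _)
      (fun j _ hne => by
        have hj : (j:ℕ) < M+1 := by
          have := j.isLt
          rcases Nat.lt_succ_iff_lt_or_eq.1 this with h | h
          · exact h
          · exact absurd (Fin.ext h : j = Fin.last (M+1)) hne
        rw [Matrix.of_apply, if_neg (by simpa using by omega : ¬ (M+1) ≤ (0:Fin (M+2)).val + (j:ℕ))]
        ring)]
    have hval : (Matrix.of fun l k : Fin (M+2) =>
        if M+1 ≤ (l:ℕ)+(k:ℕ) then coeff ((l:ℕ)+(k:ℕ)-(M+1)) t else 0) 0 (Fin.last (M+1)) = 1 := by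
      rw [Matrix.of_apply, if_pos (by simp : (M+1) ≤ ((0:Fin (M+2)):ℕ) + ((Fin.last (M+1)):ℕ))]
      simp [ht0]
    rw [hval, mul_one]
    have hminor : ((Matrix.of fun l k : Fin (M+2) =>
        if M+1 ≤ (l:ℕ)+(k:ℕ) then coeff ((l:ℕ)+(k:ℕ)-(M+1)) t else 0).submatrix
          Fin.succ (Fin.last (M+1)).succAbove)
        = (Matrix.of fun l k : Fin (M+1) =>
          if M ≤ (l:ℕ)+(k:ℕ) then coeff ((l:ℕ)+(k:ℕ)-M) t else 0) := by
      ext l k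
      rw [Matrix.submatrix_apply, Fin.succAbove_last, Matrix.of_apply, Matrix.of_apply]
      rw [Fin.val_succ, Fin.coe_castSucc]
      have e1 : ((M+1) ≤ (l:ℕ)+1+(k:ℕ)) = (M ≤ (l:ℕ)+(k:ℕ)) := by
        simp; omega
      have e2 : (l:ℕ)+1+(k:ℕ)-(M+1) = (l:ℕ)+(k:ℕ)-M := by omega
      rw [e2]
      congr 1
    rw [hminor, ih]
    have : (M+1+1).choose 2 = (M+1) + (M+1).choose 2 := by
      rw [Nat.choose_succ_succ, Nat.choose_one_right]
    rw [this, pow_add]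
    simp [Fin.val_last]

private def awEquiv (M N : ℕ) : Fin (M+1) ⊕ Fin N ≃ Fin (N+M+1) :=
  finSumFinEquiv.trans (finCongr (by omega))

private lemma awEquiv_inl (M N : ℕ) (a : Fin (M+1)) :
    ((awEquiv M N (Sum.inl a)) : ℕ) = (a : ℕ) := by
  simp [awEquiv]

private lemma awEquiv_inr (M N : ℕ) (b : Fin N) :
    ((awEquiv M N (Sum.inr b)) : ℕ) = M+1+(b : ℕ) := by
  simp [awEquiv]
  omega

end AWaux

/-- Lemma of Andrews–Wimp type: if `t = 1/s` with `s₀ = 1`, then the Hankel determinant of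
the backwards-shifted coefficients of `s` equals a signed Hankel determinant of coefficients
of `t`. -/
theorem stmt0 {R : Type*} [Field R] (s t : PowerSeries R)
    (hs0 : PowerSeries.coeff 0 s = 1) (hst : s * t = 1)
    (M N : ℕ) (hN : 0 < N) :
    Matrix.det (Matrix.of fun i j : Fin (N + M + 1) =>
        if 0 ≤ (i : ℤ) + (j : ℤ) - (M : ℤ) then
          PowerSeries.coeff ((i : ℤ) + (j : ℤ) - (M : ℤ)).toNat s
        else 0) =
      (-1 : R) ^ (N + (M + 1).choose 2) *
        Matrix.det (Matrix.of fun i j : Fin N =>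
          PowerSeries.coeff ((i : ℕ) + (j : ℕ) + M + 2) t) := by
  have ht0 : coeff 0 t = 1 := aw_ht0 hs0 hst
  set A : Matrix (Fin (N+M+1)) (Fin (N+M+1)) R := Matrix.of fun i j =>
    if M ≤ (i:ℕ)+(j:ℕ) then coeff ((i:ℕ)+(j:ℕ)-M) s else 0 with hAdef
  set T : Matrix (Fin (N+M+1)) (Fin (N+M+1)) R := Matrix.of fun i j =>
    if (i:ℕ) ≤ (j:ℕ) then coeff ((j:ℕ)-(i:ℕ)) t else 0 with hTdef
  set B : Matrix (Fin (N+M+1)) (Fin (N+M+1)) R := Matrix.of fun l k =>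
    if (l:ℕ) ≤ M ∧ (k:ℕ) ≤ M then
      (if M ≤ (l:ℕ)+(k:ℕ) then coeff ((l:ℕ)+(k:ℕ)-M) t else 0)
    else if M < (l:ℕ) ∧ M < (k:ℕ) then -coeff ((l:ℕ)+(k:ℕ)-M) t else 0 with hBdef
  -- step 1: rewrite the statement matrix as A
  have hA : (Matrix.of fun i j : Fin (N + M + 1) =>
        if 0 ≤ (i : ℤ) + (j : ℤ) - (M : ℤ) then
          PowerSeries.coeff ((i : ℤ) + (j : ℤ) - (M : ℤ)).toNat s
        else 0) = A := by
    ext i j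
    rw [hAdef]
    simp only [Matrix.of_apply]
    by_cases h : M ≤ (i:ℕ)+(j:ℕ)
    · rw [if_pos (by push_cast; omega), if_pos h]
      have e' : ((i:ℤ) + (j:ℤ) - (M:ℤ)).toNat = (i:ℕ)+(j:ℕ)-M := by omega
      rw [e']
    · rw [if_neg (by push_cast; omega), if_neg h]
  rw [hA]
  -- step 2: determinant of T
  have hdetT : T.det = 1 := by
    have htri : T.BlockTriangular id := by
      intro i j hij
      rw [hTdef]
      simp only [Matrix.of_apply]
      rw [if_neg]
      exact fun h => absurd (Fin.le_def.2 h) (not_le.2 hij)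
    rw [Matrix.det_of_upperTriangular htri]
    apply Finset.prod_eq_one
    intro i _
    rw [hTdef]
    simp [ht0]
  -- step 3: the conjugation identity
  have hAT : ∀ (i k : Fin (N+M+1)), (A * T) i k
      = if (i:ℕ) ≤ M then (if (i:ℕ)+(k:ℕ) = M then 1 else 0)
        else -∑ a ∈ Finset.range ((i:ℕ)-M), coeff a s * coeff ((i:ℕ)+(k:ℕ)-M-a) t := by
    intro i k
    rw [Matrix.mul_apply]
    exact aw_entry1 hst M _ i k
  have hprod : Tᵀ * (A * T) = B := by
    ext l k
    rw [Matrix.mul_apply]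
    have : ∀ i : Fin (N+M+1), Tᵀ l i * (A * T) i k
        = (if (i:ℕ) ≤ (l:ℕ) then coeff ((l:ℕ)-(i:ℕ)) t else 0) *
          (if (i:ℕ) ≤ M then (if (i:ℕ)+(k:ℕ) = M then (1:R) else 0)
           else -∑ a ∈ Finset.range ((i:ℕ)-M), coeff a s * coeff ((i:ℕ)+(k:ℕ)-M-a) t) := by
      intro i
      rw [Matrix.transpose_apply, hAT i k, hTdef]
      rfl
    rw [Finset.sum_congr rfl (fun i _ => this i)]
    rw [aw_entry2 hs0 hst M _ l k, hBdef]
    rfl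
  have hdetAB : A.det = B.det := by
    have h := congrArg Matrix.det hprod
    rw [Matrix.det_mul, Matrix.det_mul, Matrix.det_transpose, hdetT] at h
    simpa using h
  -- step 4: block decomposition of B
  set G : Matrix (Fin (M+1)) (Fin (M+1)) R := Matrix.of fun l k =>
    if M ≤ (l:ℕ)+(k:ℕ) then coeff ((l:ℕ)+(k:ℕ)-M) t else 0 with hGdef
  set H : Matrix (Fin N) (Fin N) R := Matrix.of fun i j =>
    coeff ((i:ℕ)+(j:ℕ)+M+2) t with hHdef
  have hsub : B.submatrix (awEquiv M N) (awEquiv M N) = Matrix.fromBlocks G 0 0 (-H) := by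
    ext il jl
    cases il with
    | inl a =>
      cases jl with
      | inl b =>
        have ha := a.isLt
        have hb := b.isLt
        rw [Matrix.submatrix_apply, Matrix.fromBlocks_apply₁₁, hBdef, hGdef]
        simp only [Matrix.of_apply, awEquiv_inl]
        rw [if_pos (⟨by omega, by omega⟩ : ((a:ℕ) ≤ M ∧ (b:ℕ) ≤ M))]
      | inr b =>
        have ha := a.isLt
        rw [Matrix.submatrix_apply, Matrix.fromBlocks_apply₁₂, hBdef]
        simp only [Matrix.of_apply, awEquiv_inl, awEquiv_inr]
        rw [if_neg (by omega), if_neg (by omega)]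
        rfl
    | inr a =>
      cases jl with
      | inl b =>
        have hb := b.isLt
        rw [Matrix.submatrix_apply, Matrix.fromBlocks_apply₂₁, hBdef]
        simp only [Matrix.of_apply, awEquiv_inl, awEquiv_inr]
        rw [if_neg (by omega), if_neg (by omega)]
        rfl
      | inr b =>
        rw [Matrix.submatrix_apply, Matrix.fromBlocks_apply₂₂, hBdef, hHdef]
        simp only [Matrix.of_apply, awEquiv_inr, Matrix.neg_apply]
        rw [if_neg (by omega), if_pos (⟨by omega, by omega⟩ : (M < M+1+(a:ℕ) ∧ M < M+1+(b:ℕ)))]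
        have e2 : M+1+(a:ℕ) + (M+1+(b:ℕ)) - M = (a:ℕ)+(b:ℕ)+M+2 := by omega
        rw [e2]
  have hdetB : B.det = G.det * (-H).det := by
    rw [← Matrix.det_submatrix_equiv_self (awEquiv M N) B, hsub,
      Matrix.det_fromBlocks_zero₂₁]
  have hnH : (-H).det = (-1:R)^N * H.det := by
    rw [Matrix.det_neg, Fintype.card_fin]
  have hGdet : G.det = (-1:R)^((M+1).choose 2) := by
    rw [hGdef]; exact aw_detG ht0 M
  rw [hdetAB, hdetB, hnH, hGdet, pow_add]
  ring
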